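/- (Dual feasibility for isotropic states, multi-copy.) On ℂ^d ⊗ ℂ^d with 1/d ≤ p < 1, set A := ((d−1)/(1−p)) Φ_d and B := (I − Φ_d)/(1−p). Then: (i) Tr(Aσ) ≤ (d−1)/(d(1−p)) and Tr(Bσ) ≥ (d−1)/(d(1−p)) for every PPT state σ, hence Tr((B−A)σ) ≥ 0; (ii) Tr(A ρ_p) = p(d−1)/(1−p) and Tr(B ρ_p) = 1; and (iii) for every n ∈ ℕ and every PPT state σ on (ℂ^d ⊗ ℂ^d)^{⊗n} (bipartition grouping all first against all second factors), Tr((B^{⊗n} − A^{⊗n})σ) ≥ 0, while Tr(A^{⊗n} ρ_p^{⊗n}) = (p(d−1)/(1−p))^n and Tr(B^{⊗n} ρ_p^{⊗n}) = 1. -/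

import Mathlib

open scoped BigOperators ComplexOrder
open Filter Topology
open scoped Matrix

noncomputable section

namespace QRT

open scoped Classical

variable {ι κ : Type*} [Fintype ι] [DecidableEq ι] [Fintype κ] [DecidableEq κ]

/-- A density matrix (quantum state): positive semidefinite with unit trace. -/
def IsState (ρ : Matrix ι ι ℂ) : Prop :=
  ρ.PosSemidef ∧ ρ.trace = 1

/-- Loewner order: `A ≤ B` iff `B - A` is positive semidefinite. -/
def Loewner (A B : Matrix ι ι ℂ) : Prop :=
  (B - A).PosSemidef

/-- Trace norm (sum of singular values): `‖A‖₁ = Tr √(AᴴA)`. -/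
def traceNorm (A : Matrix ι ι ℂ) : ℝ :=
  (((Matrix.posSemidef_conjTranspose_mul_self A).1.eigenvectorUnitary.1 *
    Matrix.diagonal (((↑) : ℝ → ℂ) ∘ (√·) ∘ (Matrix.posSemidef_conjTranspose_mul_self A).1.eigenvalues) *
    (star (Matrix.posSemidef_conjTranspose_mul_self A).1.eigenvectorUnitary : Matrix ι ι ℂ)).trace).re

/-- The max-relative entropy `D_max(ρ‖σ)` (base 2); `+∞` if infeasible. -/
def Dmax (ρ σ : Matrix ι ι ℂ) : EReal :=
  sInf {x : EReal | ∃ l : ℝ, 0 < l ∧ Loewner ρ (l • σ) ∧ x = ((Real.logb 2 l : ℝ) : EReal)}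

/-- The projective relative entropy (Hilbert projective metric). -/
def DOmega (ρ σ : Matrix ι ι ℂ) : EReal :=
  Dmax ρ σ + Dmax σ ρ

/-- Support inclusion `supp ρ ⊆ supp σ` for positive semidefinite matrices,
expressed as kernel inclusion `ker σ ⊆ ker ρ`. -/
def SuppLe (ρ σ : Matrix ι ι ℂ) : Prop :=
  ∀ v : ι → ℂ, σ.mulVec v = 0 → ρ.mulVec v = 0

/-- Application of a real function to a Hermitian matrix via the spectral decomposition. -/
def mfun (f : ℝ → ℝ) (A : Matrix ι ι ℂ) : Matrix ι ι ℂ :=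
  if hA : A.IsHermitian then
    (hA.eigenvectorUnitary : Matrix ι ι ℂ) *
      Matrix.diagonal (fun i => (f (hA.eigenvalues i) : ℂ)) *
      (hA.eigenvectorUnitary : Matrix ι ι ℂ).conjTranspose
  else 0

/-- Base-2 matrix logarithm on the support of a positive semidefinite matrix. -/
def mlog2 (A : Matrix ι ι ℂ) : Matrix ι ι ℂ :=
  mfun (fun x => if x ≤ 0 then 0 else Real.logb 2 x) A

/-- Umegaki quantum relative entropy (base 2):
`D(ρ‖σ) = Tr[ρ (log₂ ρ - log₂ σ)]` if `supp ρ ⊆ supp σ`, and `+∞` otherwise. -/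
def Drel (ρ σ : Matrix ι ι ℂ) : EReal :=
  if SuppLe ρ σ then (((ρ * (mlog2 ρ - mlog2 σ)).trace.re : ℝ) : EReal) else ⊤

/-- Relative entropy of a resource: `D_F(ρ) = min_{σ ∈ F} D(ρ‖σ)`. -/
def DF (F : Set (Matrix ι ι ℂ)) (ρ : Matrix ι ι ℂ) : EReal :=
  sInf {x : EReal | ∃ σ ∈ F, x = Drel ρ σ}

/-- Max-relative entropy of a resource. -/
def DmaxF (F : Set (Matrix ι ι ℂ)) (ρ : Matrix ι ι ℂ) : EReal :=
  sInf {x : EReal | ∃ σ ∈ F, x = Dmax ρ σ}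

/-- Projective relative entropy of a resource: `D_{Ω,F}(ρ) = min_{σ ∈ F} D_Ω(ρ‖σ)`. -/
def DOmegaF (F : Set (Matrix ι ι ℂ)) (ρ : Matrix ι ι ℂ) : EReal :=
  sInf {x : EReal | ∃ σ ∈ F, x = DOmega ρ σ}

/-- Min-relative entropy of a resource for a pure state `ψ`:
`D_{min,F}(ψ) = min_{σ∈F} (-log₂⟨ψ|σ|ψ⟩)` where `⟨ψ|σ|ψ⟩ = Tr(ψσ)`. -/
def DminF (F : Set (Matrix ι ι ℂ)) (ψ : Matrix ι ι ℂ) : EReal :=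
  sInf {x : EReal | ∃ σ ∈ F, 0 < ((ψ * σ).trace).re ∧
    x = ((-(Real.logb 2 (((ψ * σ).trace).re)) : ℝ) : EReal)}

/-- The convex cone generated by a set of states. -/
def cone (F : Set (Matrix ι ι ℂ)) : Set (Matrix ι ι ℂ) :=
  {A | ∃ t : ℝ, 0 ≤ t ∧ ∃ σ ∈ F, A = t • σ}

/-- `D_s(ω‖σ) := inf { log₂ λ : λ > 0, λσ - ω ∈ cone(F) }`. -/
def Ds (F : Set (Matrix ι ι ℂ)) (ω σ : Matrix ι ι ℂ) : EReal :=
  sInf {x : EReal | ∃ l : ℝ, 0 < l ∧ (l • σ - ω) ∈ cone F ∧ x = ((Real.logb 2 l : ℝ) : EReal)}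

/-- The free variant of the projective relative entropy:
`D_{Ω,s,F}(ω) := min_{σ∈F} [ D_s(ω‖σ) + D_max(σ‖ω) ]`. -/
def DOmegasF (F : Set (Matrix ι ι ℂ)) (ω : Matrix ι ι ℂ) : EReal :=
  sInf {x : EReal | ∃ σ ∈ F, x = Ds F ω σ + Dmax σ ω}

/-- The standard robustness `R_{s,F}(ρ) := inf{ λ ≥ 0 : ∃ σ ∈ F, (ρ+λσ)/(1+λ) ∈ F }`,
as an extended real (`+∞` if infeasible). -/
def Rs (F : Set (Matrix ι ι ℂ)) (ρ : Matrix ι ι ℂ) : EReal :=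
  sInf {x : EReal | ∃ l : ℝ, 0 ≤ l ∧ (∃ σ ∈ F, ((1 + l)⁻¹ • (ρ + l • σ)) ∈ F) ∧
    x = ((l : ℝ) : EReal)}

/-- `log₂(1 + R_{s,F}(ρ))`, the logarithmic standard robustness. -/
def logRs (F : Set (Matrix ι ι ℂ)) (ρ : Matrix ι ι ℂ) : EReal :=
  sInf {x : EReal | ∃ l : ℝ, 0 ≤ l ∧ (∃ σ ∈ F, ((1 + l)⁻¹ • (ρ + l • σ)) ∈ F) ∧
    x = ((Real.logb 2 (1 + l) : ℝ) : EReal)}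

/-- The Choi matrix of a linear map on matrices. -/
def choi (Λ : Matrix ι ι ℂ →ₗ[ℂ] Matrix κ κ ℂ) : Matrix (ι × κ) (ι × κ) ℂ :=
  Matrix.of fun p q => Λ (Matrix.single p.1 q.1 1) p.2 q.2

/-- Complete positivity, via Choi's theorem. -/
def IsCP (Λ : Matrix ι ι ℂ →ₗ[ℂ] Matrix κ κ ℂ) : Prop :=
  (choi Λ).PosSemidef

/-- Trace non-increasing on positive semidefinite inputs. -/
def TraceNonincreasing (Λ : Matrix ι ι ℂ →ₗ[ℂ] Matrix κ κ ℂ) : Prop :=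
  ∀ A : Matrix ι ι ℂ, A.PosSemidef → ((Λ A).trace).re ≤ (A.trace).re

/-- Normalization `A ↦ A / Tr A`. -/
def normalize (A : Matrix ι ι ℂ) : Matrix ι ι ℂ :=
  (A.trace)⁻¹ • A

/-- A free probabilistic operation: a completely positive trace–non-increasing map
that sends free states of `F` to free states of `F'` after renormalization. -/
def IsFreeOp (F : Set (Matrix ι ι ℂ)) (F' : Set (Matrix κ κ ℂ))
    (Λ : Matrix ι ι ℂ →ₗ[ℂ] Matrix κ κ ℂ) : Prop :=
  IsCP Λ ∧ TraceNonincreasing Λ ∧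
    ∀ σ ∈ F, 0 < ((Λ σ).trace).re → normalize (Λ σ) ∈ F'

/-- `n`-fold tensor (Kronecker) power of a matrix, indexed by `Fin n → ι`. -/
def tpow (ρ : Matrix ι ι ℂ) (n : ℕ) : Matrix (Fin n → ι) (Fin n → ι) ℂ :=
  Matrix.of fun i j => ∏ k, ρ (i k) (j k)

/-- Tensor product of tensor-power-indexed matrices. -/
def tmul {n m : ℕ} (A : Matrix (Fin n → ι) (Fin n → ι) ℂ)
    (B : Matrix (Fin m → ι) (Fin m → ι) ℂ) :
    Matrix (Fin (n + m) → ι) (Fin (n + m) → ι) ℂ :=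
  Matrix.of fun i j =>
    A (fun k => i (Fin.castAdd m k)) (fun k => j (Fin.castAdd m k)) *
      B (fun k => i (Fin.natAdd n k)) (fun k => j (Fin.natAdd n k))

/-- Partial trace over the tensor factor in position `k`. -/
def ptrace {n : ℕ} (σ : Matrix (Fin (n + 1) → ι) (Fin (n + 1) → ι) ℂ) (k : Fin (n + 1)) :
    Matrix (Fin n → ι) (Fin n → ι) ℂ :=
  Matrix.of fun i j => ∑ x : ι, σ (k.insertNth x i) (k.insertNth x j)

/-- Axioms I–IV for a family of free-state sets on tensor powers of `ℂ^d`: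
convex closed sets of states, containing the powers of a full-rank free state,
closed under partial traces and under tensor products. -/
structure IsFreeFamily (d : ℕ)
    (F : ∀ n : ℕ, Set (Matrix (Fin n → Fin d) (Fin n → Fin d) ℂ)) : Prop where
  states : ∀ n, ∀ σ ∈ F n, IsState σ
  convex : ∀ n, Convex ℝ (F n)
  closed : ∀ n, IsClosed (F n)
  fullRank : ∃ σ : Matrix (Fin d) (Fin d) ℂ, IsState σ ∧ σ.PosDef ∧ ∀ n, tpow σ n ∈ F n
  ptrace_mem : ∀ n, ∀ σ ∈ F (n + 1), ∀ k : Fin (n + 1), ptrace σ k ∈ F n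
  tmul_mem : ∀ n m, ∀ σ ∈ F n, ∀ σ' ∈ F m, tmul σ σ' ∈ F (n + m)

variable {I K : ℕ → Type*} [∀ n, Fintype (I n)] [∀ n, DecidableEq (I n)]
  [∀ n, Fintype (K n)] [∀ n, DecidableEq (K n)]

/-- The smallest trace-distance error achievable when transforming `ρseq n` into
`ωseq ⌊rn⌋` by free probabilistic operations. -/
def convErr (F : ∀ n, Set (Matrix (I n) (I n) ℂ)) (F' : ∀ n, Set (Matrix (K n) (K n) ℂ))
    (ρseq : ∀ n, Matrix (I n) (I n) ℂ) (ωseq : ∀ n, Matrix (K n) (K n) ℂ)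
    (r : ℝ) (n : ℕ) : ℝ :=
  sInf {e : ℝ |
    ∃ Λ : Matrix (I n) (I n) ℂ →ₗ[ℂ] Matrix (K ⌊r * n⌋₊) (K ⌊r * n⌋₊) ℂ,
      IsFreeOp (F n) (F' ⌊r * n⌋₊) Λ ∧
      e = (1 / 2) * traceNorm (normalize (Λ (ρseq n)) - ωseq ⌊r * n⌋₊)}

/-- The probabilistic transformation rate `r_prob`, as an extended real. -/
def rprob (F : ∀ n, Set (Matrix (I n) (I n) ℂ)) (F' : ∀ n, Set (Matrix (K n) (K n) ℂ))
    (ρseq : ∀ n, Matrix (I n) (I n) ℂ) (ωseq : ∀ n, Matrix (K n) (K n) ℂ) : EReal :=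
  sSup {x : EReal | ∃ r : ℝ, 0 ≤ r ∧ x = (r : EReal) ∧
    Tendsto (fun n => convErr F F' ρseq ωseq r n) atTop (nhds 0)}

/-- The strong converse probabilistic transformation rate `r†_prob`. -/
def rprobSC (F : ∀ n, Set (Matrix (I n) (I n) ℂ)) (F' : ∀ n, Set (Matrix (K n) (K n) ℂ))
    (ρseq : ∀ n, Matrix (I n) (I n) ℂ) (ωseq : ∀ n, Matrix (K n) (K n) ℂ) : EReal :=
  sSup {x : EReal | ∃ r : ℝ, 0 ≤ r ∧ x = (r : EReal) ∧
    liminf (fun n => convErr F F' ρseq ωseq r n) atTop < 1}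

/-- A pure state `ψ = |v⟩⟨v|` with `‖v‖ = 1`. -/
def IsPure (ψ : Matrix ι ι ℂ) : Prop :=
  IsState ψ ∧ ∃ v : ι → ℂ, ψ = Matrix.of fun i j => v i * (starRingEnd ℂ) (v j)

/-- Tensor product across the A/B bipartition of `n`-copy bipartite operators. -/
def abProd {dA dB n : ℕ} (A : Matrix (Fin n → Fin dA) (Fin n → Fin dA) ℂ)
    (B : Matrix (Fin n → Fin dB) (Fin n → Fin dB) ℂ) :
    Matrix (Fin n → Fin dA × Fin dB) (Fin n → Fin dA × Fin dB) ℂ :=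
  Matrix.of fun i j =>
    A (fun k => (i k).1) (fun k => (j k).1) * B (fun k => (i k).2) (fun k => (j k).2)

/-- Separable states on `n` copies of a bipartite system `ℂ^{dA} ⊗ ℂ^{dB}`, with respect to
the bipartition grouping all `A` factors against all `B` factors. -/
def SEP (dA dB n : ℕ) :
    Set (Matrix (Fin n → Fin dA × Fin dB) (Fin n → Fin dA × Fin dB) ℂ) :=
  closure (convexHull ℝ {ρ | ∃ A B, IsState A ∧ IsState B ∧ ρ = abProd A B})

/-- Separable states on a single copy of `ℂ^{dA} ⊗ ℂ^{dB}`. -/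
def SEP1 (dA dB : ℕ) : Set (Matrix (Fin dA × Fin dB) (Fin dA × Fin dB) ℂ) :=
  closure (convexHull ℝ
    {ρ | ∃ (A : Matrix (Fin dA) (Fin dA) ℂ) (B : Matrix (Fin dB) (Fin dB) ℂ),
      IsState A ∧ IsState B ∧ ρ = Matrix.of fun p q => A p.1 q.1 * B p.2 q.2})

/-- Partial transpose on the second subsystem (single copy). -/
def ptrans1 {dA dB : ℕ} (M : Matrix (Fin dA × Fin dB) (Fin dA × Fin dB) ℂ) :
    Matrix (Fin dA × Fin dB) (Fin dA × Fin dB) ℂ :=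
  Matrix.of fun p q => M (p.1, q.2) (q.1, p.2)

/-- PPT states on a single copy. -/
def PPT1 (dA dB : ℕ) : Set (Matrix (Fin dA × Fin dB) (Fin dA × Fin dB) ℂ) :=
  {σ | IsState σ ∧ (ptrans1 σ).PosSemidef}

/-- Partial transpose over all `B` factors of an `n`-copy bipartite system. -/
def ptransN {dA dB n : ℕ}
    (M : Matrix (Fin n → Fin dA × Fin dB) (Fin n → Fin dA × Fin dB) ℂ) :
    Matrix (Fin n → Fin dA × Fin dB) (Fin n → Fin dA × Fin dB) ℂ :=
  Matrix.of fun i j => M (fun k => ((i k).1, (j k).2)) (fun k => ((j k).1, (i k).2))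

/-- PPT states on `n` copies, w.r.t. the bipartition grouping all `A` factors
against all `B` factors. -/
def PPTn (dA dB n : ℕ) :
    Set (Matrix (Fin n → Fin dA × Fin dB) (Fin n → Fin dA × Fin dB) ℂ) :=
  {σ | IsState σ ∧ (ptransN σ).PosSemidef}

/-- The maximally entangled state `Φ_d` on `ℂ^d ⊗ ℂ^d`. -/
def PhiMax (d : ℕ) : Matrix (Fin d × Fin d) (Fin d × Fin d) ℂ :=
  Matrix.of fun p q => if p.1 = p.2 ∧ q.1 = q.2 then ((d : ℂ))⁻¹ else 0

/-- The isotropic state `ρ_p = p Φ_d + (1-p)(I - Φ_d)/(d²-1)`. -/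
def iso (d : ℕ) (p : ℝ) : Matrix (Fin d × Fin d) (Fin d × Fin d) ℂ :=
  p • PhiMax d + ((1 - p) / ((d : ℝ) ^ 2 - 1)) • (1 - PhiMax d)


set_option linter.unusedSectionVars false
variable {α β : Type*} [Fintype α] [DecidableEq α] [Fintype β] [DecidableEq β]
variable {α β : Type*} [Fintype α] [DecidableEq α] [Fintype β] [DecidableEq β]

lemma psd_smul_c {M : Matrix α α ℂ} (hM : M.PosSemidef) {r : ℝ} (hr : 0 ≤ r) :
    (((r : ℂ)) • M).PosSemidef := by
  refine ⟨?_, fun x => ?_⟩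
  · unfold Matrix.IsHermitian
    rw [Matrix.conjTranspose_smul, hM.1.eq]
    congr 1
    simp [Complex.ext_iff]
  · exact (hM.smul (Complex.zero_le_real.mpr hr)).2 x

lemma trace_psd_nonneg {X : Matrix α α ℂ} (hX : X.PosSemidef) : (0 : ℂ) ≤ X.trace := by
  rw [Matrix.trace]
  apply Finset.sum_nonneg
  intro i _
  have := hX.dotProduct_mulVec_nonneg (Pi.single i 1)
  simpa [dotProduct, Matrix.mulVec, Pi.single_apply, Matrix.diag] using this

lemma trace_mul_psd_nonneg {X Y : Matrix α α ℂ} (hX : X.PosSemidef) (hY : Y.PosSemidef) :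
    0 ≤ ((X * Y).trace).re := by
  open scoped MatrixOrder Matrix.Norms.L2Operator in
  obtain ⟨C, rfl⟩ := CStarAlgebra.nonneg_iff_eq_star_mul_self.mp hX.nonneg
  rw [Matrix.star_eq_conjTranspose, Matrix.mul_assoc, Matrix.trace_mul_comm]
  have h : (C * Y * Cᴴ).PosSemidef := hY.mul_mul_conjTranspose_same C
  have := trace_psd_nonneg h
  simpa using (Complex.le_def.mp this).1

/-- Real-scalar smul on complex matrices equals complex-cast smul. -/
lemma rsmul (r : ℝ) (M : Matrix α β ℂ) : r • M = ((r : ℂ)) • M := by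
  ext i j
  simp [Complex.real_smul]

/-- The permutation matrix of a function. -/
def permMat (f : α → α) : Matrix α α ℂ :=
  Matrix.of fun i j => if i = f j then 1 else 0

lemma permMat_conjTranspose {f : α → α} (hf : Function.Involutive f) :
    (permMat f)ᴴ = permMat f := by
  ext i j
  simp only [Matrix.conjTranspose_apply, permMat, Matrix.of_apply]
  by_cases h : i = f j
  · have hj : j = f i := by rw [h, hf j]
    rw [if_pos h, if_pos hj, star_one]
  · have hj : ¬ (j = f i) := fun hj => h (by rw [hj, hf i])
    rw [if_neg h, if_neg hj, star_zero]

lemma permMat_mul_self {f : α → α} (hf : Function.Involutive f) :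
    permMat f * permMat f = 1 := by
  ext i j
  simp only [Matrix.mul_apply, permMat, Matrix.of_apply, ite_mul, one_mul, zero_mul]
  have : ∀ k : α, (i = f k) ↔ (f i = k) := fun k => by rw [← hf.eq_iff (x := i)]
  simp_rw [this]
  rw [Finset.sum_ite_eq Finset.univ (f i) (fun k => if k = f j then (1:ℂ) else 0)]
  simp [Matrix.one_apply, hf.injective.eq_iff]

lemma one_sub_permMat_psd {f : α → α} (hf : Function.Involutive f) :
    ((1 : Matrix α α ℂ) - permMat f).PosSemidef := by
  have hsq : ((1 : Matrix α α ℂ) - permMat f)ᴴ * (1 - permMat f) = (2 : ℂ) • (1 - permMat f) := by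
    rw [Matrix.conjTranspose_sub, Matrix.conjTranspose_one, permMat_conjTranspose hf,
      Matrix.sub_mul, Matrix.one_mul, Matrix.mul_sub, Matrix.mul_one, permMat_mul_self hf]
    ext i j
    simp only [Matrix.sub_apply, Matrix.smul_apply, smul_eq_mul]
    ring
  have h2 : (1 : Matrix α α ℂ) - permMat f = (((2⁻¹ : ℝ) : ℂ)) • (((1 : Matrix α α ℂ) - permMat f)ᴴ * (1 - permMat f)) := by
    rw [hsq, smul_smul]
    norm_num
  rw [h2]
  exact psd_smul_c (Matrix.posSemidef_conjTranspose_mul_self _) (by norm_num)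
/-- Kronecker product (with `Prod` index). -/
def kron (M : Matrix α α ℂ) (N : Matrix β β ℂ) : Matrix (α × β) (α × β) ℂ :=
  Matrix.of fun i j => M i.1 j.1 * N i.2 j.2

lemma kron_conjTranspose_mul_self (C : Matrix α α ℂ) (D : Matrix β β ℂ) :
    kron (Cᴴ * C) (Dᴴ * D) = (kron C D)ᴴ * (kron C D) := by
  ext i j
  simp only [kron, Matrix.mul_apply, Matrix.conjTranspose_apply, Matrix.of_apply]
  rw [Finset.sum_mul_sum, Fintype.sum_prod_type]
  apply Finset.sum_congr rfl
  intro a _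
  apply Finset.sum_congr rfl
  intro b _
  simp only [star_mul']
  ring

lemma kron_psd {M : Matrix α α ℂ} {N : Matrix β β ℂ} (hM : M.PosSemidef) (hN : N.PosSemidef) :
    (kron M N).PosSemidef := by
  exact hM.kronecker hN

lemma tpow_zero (M : Matrix α α ℂ) : tpow M 0 = 1 := by
  ext i j
  simp [tpow, Matrix.one_apply, Subsingleton.elim i j]

lemma tpow_succ (M : Matrix α α ℂ) (n : ℕ) :
    tpow M (n + 1) = (kron M (tpow M n)).submatrix
      (fun i : Fin (n+1) → α => ((i 0, fun k : Fin n => i k.succ) : α × (Fin n → α)))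
      (fun j : Fin (n+1) → α => ((j 0, fun k : Fin n => j k.succ) : α × (Fin n → α))) := by
  ext i j
  simp [tpow, kron, Matrix.submatrix_apply, Fin.prod_univ_succ]

/-- The equivalence `(Fin (n+1) → α) ≃ α × (Fin n → α)`. -/
def splitEquiv (n : ℕ) : (Fin (n+1) → α) ≃ α × (Fin n → α) :=
  (Fin.consEquiv (fun _ => α)).symm

lemma splitEquiv_apply (n : ℕ) (i : Fin (n+1) → α) :
    splitEquiv n i = (i 0, fun k : Fin n => i k.succ) := rfl

lemma kron_decomp (M : Matrix α α ℂ) (N : Matrix β β ℂ) (a b : ℂ) :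
    kron M N - (a * b) • 1 =
      kron M (N - b • 1) + kron (M - a • 1) (b • (1 : Matrix β β ℂ)) := by
  ext i j
  simp only [kron, Matrix.sub_apply, Matrix.add_apply, Matrix.smul_apply, Matrix.of_apply,
    Matrix.one_apply, smul_eq_mul, Prod.ext_iff]
  split_ifs <;> simp_all <;> ring

lemma tpow_sub_psd {M : Matrix α α ℂ} {a : ℝ} (ha : 0 ≤ a)
    (hM : (M - ((a : ℂ)) • 1).PosSemidef) :
    ∀ n : ℕ, (tpow M n - ((a : ℂ)) ^ n • 1).PosSemidef
  | 0 => by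
      rw [tpow_zero, pow_zero, one_smul, sub_self]
      exact Matrix.PosSemidef.zero
  | (n + 1) => by
      have hMpsd : M.PosSemidef := by
        have h := hM.add (psd_smul_c Matrix.PosSemidef.one ha)
        simpa using h
      have ih := tpow_sub_psd ha hM n
      have h1 : ((a : ℂ)) ^ (n+1) • (1 : Matrix (Fin (n+1) → α) (Fin (n+1) → α) ℂ) =
          (((a : ℂ)) ^ (n+1) • (1 : Matrix (α × (Fin n → α)) (α × (Fin n → α)) ℂ)).submatrix
            (splitEquiv n) (splitEquiv n) := by
        ext i j
        simp [Matrix.submatrix_apply, Matrix.one_apply, EmbeddingLike.apply_eq_iff_eq]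
      rw [tpow_succ, show (fun i : Fin (n+1) → α => ((i 0, fun k : Fin n => i k.succ) : α × (Fin n → α))) = ⇑(splitEquiv n) from rfl,
        h1]
      have hsub : (kron M (tpow M n)).submatrix ⇑(splitEquiv n) ⇑(splitEquiv n) -
          (((a : ℂ)) ^ (n+1) • (1 : Matrix (α × (Fin n → α)) (α × (Fin n → α)) ℂ)).submatrix ⇑(splitEquiv n) ⇑(splitEquiv n) =
          (kron M (tpow M n) - ((a : ℂ)) ^ (n+1) • 1).submatrix ⇑(splitEquiv n) ⇑(splitEquiv n) := by
        ext i j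
        simp [Matrix.submatrix_apply]
      rw [hsub]
      apply Matrix.PosSemidef.submatrix _ (splitEquiv n)
      rw [show ((a:ℂ))^(n+1) = (a:ℂ) * (a:ℂ)^n by ring, kron_decomp]
      have hpow : (((a:ℂ))^n • (1 : Matrix (Fin n → α) (Fin n → α) ℂ)).PosSemidef := by
        rw [show ((a:ℂ))^n = (((a^n : ℝ) : ℂ)) by push_cast; ring]
        exact psd_smul_c Matrix.PosSemidef.one (pow_nonneg ha n)
      exact (kron_psd hMpsd ih).add (kron_psd hM hpow)

lemma tpow_smul (c : ℂ) (M : Matrix α α ℂ) (n : ℕ) :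
    tpow (c • M) n = c ^ n • tpow M n := by
  ext i j
  simp only [tpow, Matrix.smul_apply, Matrix.of_apply, smul_eq_mul]
  rw [Finset.prod_mul_distrib, Finset.prod_const, Finset.card_univ, Fintype.card_fin]

lemma tpow_permMat {f : α → α} (n : ℕ) :
    tpow (permMat f) n = permMat (fun i : Fin n → α => fun k => f (i k)) := by
  ext i j
  simp only [tpow, permMat, Matrix.of_apply]
  by_cases h : i = fun k => f (j k)
  · rw [if_pos h]
    apply Finset.prod_eq_one
    intro k _
    rw [if_pos (by rw [h])]
  · rw [if_neg h]
    obtain ⟨k, hk⟩ : ∃ k, i k ≠ f (j k) := by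
      by_contra hc
      push_neg at hc
      exact h (funext hc)
    apply Finset.prod_eq_zero (Finset.mem_univ k)
    rw [if_neg hk]

lemma trace_tpow_mul (X Y : Matrix α α ℂ) (n : ℕ) :
    ((tpow X n) * (tpow Y n)).trace = ((X * Y).trace) ^ n := by
  have hT : (X * Y).trace = ∑ a, ∑ b, X a b * Y b a := by
    simp [Matrix.trace, Matrix.diag, Matrix.mul_apply]
  rw [hT, show (∑ a, ∑ b, X a b * Y b a) ^ n = ∏ _k : Fin n, (∑ a, ∑ b, X a b * Y b a) by
    rw [Finset.prod_const, Finset.card_univ, Fintype.card_fin]]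
  rw [Fintype.prod_sum fun _ a => ∑ b, X a b * Y b a]
  simp only [Matrix.trace, Matrix.diag, Matrix.mul_apply, tpow, Matrix.of_apply]
  apply Finset.sum_congr rfl
  intro i _
  rw [Fintype.prod_sum fun k b => X (i k) b * Y b (i k)]
  apply Finset.sum_congr rfl
  intro j _
  rw [← Finset.prod_mul_distrib]

variable {γ δ : Type*} [Fintype γ] [DecidableEq γ] [Fintype δ] [DecidableEq δ]

lemma ptrans1_trace {dA dB : ℕ} (σ : Matrix (Fin dA × Fin dB) (Fin dA × Fin dB) ℂ) :
    (ptrans1 σ).trace = σ.trace := by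
  simp [ptrans1, Matrix.trace, Matrix.diag]

/-- The pairing identity `Tr(X σ) = Tr(X^Γ σ^Γ)` (single copy). -/
lemma ptrans1_trace_pair {dA dB : ℕ} (X σ : Matrix (Fin dA × Fin dB) (Fin dA × Fin dB) ℂ) :
    (ptrans1 X * ptrans1 σ).trace = (X * σ).trace := by
  simp only [Matrix.trace, Matrix.diag, Matrix.mul_apply, ptrans1, Matrix.of_apply]
  rw [← Fintype.sum_prod_type', ← Fintype.sum_prod_type']
  refine Fintype.sum_equiv ⟨fun x => ((x.1.1, x.2.2), (x.2.1, x.1.2)),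
    fun x => ((x.1.1, x.2.2), (x.2.1, x.1.2)), ?_, ?_⟩ _ _ ?_
  · rintro ⟨⟨a, b⟩, ⟨c, e⟩⟩; rfl
  · rintro ⟨⟨a, b⟩, ⟨c, e⟩⟩; rfl
  · rintro ⟨⟨a, b⟩, ⟨c, e⟩⟩; rfl

lemma ptransN_trace_pair {dA dB n : ℕ}
    (X σ : Matrix (Fin n → Fin dA × Fin dB) (Fin n → Fin dA × Fin dB) ℂ) :
    (ptransN X * ptransN σ).trace = (X * σ).trace := by
  simp only [Matrix.trace, Matrix.diag, Matrix.mul_apply, ptransN, Matrix.of_apply]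
  rw [← Fintype.sum_prod_type', ← Fintype.sum_prod_type']
  refine Fintype.sum_equiv ⟨fun x => (fun k => ((x.1 k).1, (x.2 k).2), fun k => ((x.2 k).1, (x.1 k).2)),
    fun x => (fun k => ((x.1 k).1, (x.2 k).2), fun k => ((x.2 k).1, (x.1 k).2)), ?_, ?_⟩ _ _ ?_
  · rintro ⟨i, j⟩; simp
  · rintro ⟨i, j⟩; simp
  · rintro ⟨i, j⟩; rfl

lemma ptransN_sub {dA dB n : ℕ}
    (X Y : Matrix (Fin n → Fin dA × Fin dB) (Fin n → Fin dA × Fin dB) ℂ) :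
    ptransN (X - Y) = ptransN X - ptransN Y := by
  ext i j; simp [ptransN]

lemma ptransN_tpow {dA dB : ℕ} (X : Matrix (Fin dA × Fin dB) (Fin dA × Fin dB) ℂ) (n : ℕ) :
    ptransN (tpow X n) = tpow (ptrans1 X) n := by
  ext i j; simp [ptransN, tpow, ptrans1]

lemma ptrans1_smul {dA dB : ℕ} (r : ℂ) (M : Matrix (Fin dA × Fin dB) (Fin dA × Fin dB) ℂ) :
    ptrans1 (r • M) = r • ptrans1 M := by
  ext i j; simp [ptrans1]

lemma ptrans1_one {dA dB : ℕ} :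
    ptrans1 (1 : Matrix (Fin dA × Fin dB) (Fin dA × Fin dB) ℂ) = 1 := by
  ext p q
  simp only [ptrans1, Matrix.of_apply, Matrix.one_apply, Prod.ext_iff]
  by_cases h1 : p.1 = q.1 <;> by_cases h2 : p.2 = q.2 <;> simp [h1, h2, eq_comm]

lemma ptrans1_sub {dA dB : ℕ} (X Y : Matrix (Fin dA × Fin dB) (Fin dA × Fin dB) ℂ) :
    ptrans1 (X - Y) = ptrans1 X - ptrans1 Y := by
  ext i j; simp [ptrans1]

lemma ptrans1_PhiMax {d : ℕ} :
    ptrans1 (PhiMax d) = ((d : ℂ))⁻¹ • permMat (Prod.swap : Fin d × Fin d → Fin d × Fin d) := by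
  ext p q
  simp only [ptrans1, PhiMax, permMat, Matrix.of_apply, Matrix.smul_apply, smul_eq_mul]
  have : (p.1 = q.2 ∧ q.1 = p.2) ↔ p = Prod.swap q := by
    rw [Prod.ext_iff]
    simp [Prod.swap, and_comm, eq_comm]
  rw [if_congr this rfl rfl]
  split_ifs <;> simp

lemma PhiMax_mul_self {d : ℕ} (hd : (d : ℂ) ≠ 0) : PhiMax d * PhiMax d = PhiMax d := by
  ext p q
  simp only [Matrix.mul_apply, PhiMax, Matrix.of_apply]
  rw [Fintype.sum_prod_type]
  by_cases hp : p.1 = p.2 <;> by_cases hq : q.1 = q.2 <;>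
    simp [hp, hq, Finset.sum_ite_eq, Finset.mul_sum]
  · field_simp

lemma PhiMax_trace {d : ℕ} (hd : (d : ℂ) ≠ 0) : (PhiMax d).trace = 1 := by
  simp only [Matrix.trace, Matrix.diag, PhiMax, Matrix.of_apply]
  rw [Fintype.sum_prod_type]
  simp [Finset.sum_ite_eq]
  field_simp


/-- **dual feasibility for isotropic states, multi-copy.**
With `A := ((d-1)/(1-p)) Φ_d` and `B := (I - Φ_d)/(1-p)`: (i) for every PPT state `σ`,
`Tr(Aσ) ≤ (d-1)/(d(1-p)) ≤ Tr(Bσ)`, hence `Tr((B-A)σ) ≥ 0`; (ii) `Tr(Aρ_p) = p(d-1)/(1-p)`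
and `Tr(Bρ_p) = 1`; (iii) for every `n` and every PPT state `σ` on `n` copies,
`Tr((B^{⊗n} - A^{⊗n})σ) ≥ 0`, while `Tr(A^{⊗n}ρ_p^{⊗n}) = (p(d-1)/(1-p))^n` and
`Tr(B^{⊗n}ρ_p^{⊗n}) = 1`. -/
theorem isotropic_dual_feasibility {d : ℕ} (hd : 2 ≤ d)
    (p : ℝ) (hp : (d : ℝ)⁻¹ ≤ p) (hp1 : p < 1)
    (A B : Matrix (Fin d × Fin d) (Fin d × Fin d) ℂ)
    (hA : A = (((d : ℝ) - 1) / (1 - p)) • PhiMax d)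
    (hB : B = ((1 - p)⁻¹ : ℝ) • ((1 : Matrix (Fin d × Fin d) (Fin d × Fin d) ℂ) - PhiMax d)) :
    (∀ σ ∈ PPT1 d d,
      ((A * σ).trace).re ≤ ((d : ℝ) - 1) / ((d : ℝ) * (1 - p)) ∧
      ((d : ℝ) - 1) / ((d : ℝ) * (1 - p)) ≤ ((B * σ).trace).re ∧
      0 ≤ (((B - A) * σ).trace).re) ∧
    ((A * iso d p).trace = ((p * ((d : ℝ) - 1) / (1 - p) : ℝ) : ℂ) ∧
      (B * iso d p).trace = 1) ∧
    (∀ n : ℕ, ∀ σ ∈ PPTn d d n,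
      0 ≤ (((tpow B n - tpow A n) * σ).trace).re) ∧
    (∀ n : ℕ,
      (tpow A n * tpow (iso d p) n).trace = (((p * ((d : ℝ) - 1) / (1 - p)) ^ n : ℝ) : ℂ) ∧
      (tpow B n * tpow (iso d p) n).trace = 1) := by
  have hd2R : (2 : ℝ) ≤ (d : ℝ) := by exact_mod_cast hd
  have hd0R : (0 : ℝ) < (d : ℝ) := by linarith
  have h1p : (0 : ℝ) < 1 - p := by linarith
  have hdC : (d : ℂ) ≠ 0 := Nat.cast_ne_zero.mpr (by omega)
  have hpC : (1 : ℂ) - (p : ℂ) ≠ 0 := by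
    simpa using Complex.ofReal_ne_zero.mpr (ne_of_gt h1p)
  have hdR : (d : ℝ) ≠ 0 := ne_of_gt hd0R
  have h1pR : (1 - p : ℝ) ≠ 0 := ne_of_gt h1p
  have hswap : Function.Involutive (Prod.swap : Fin d × Fin d → Fin d × Fin d) :=
    fun x => Prod.swap_swap x
  have ht : (0 : ℝ) ≤ ((d : ℝ) - 1) / ((d : ℝ) * (1 - p)) :=
    div_nonneg (by linarith) (by positivity)
  have hs : (0 : ℝ) ≤ (((d : ℝ) * (1 - p))⁻¹ : ℝ) := by positivity
  -- partial transposes of A and B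
  have hAG : ptrans1 A = ((((d : ℝ) - 1) / ((d : ℝ) * (1 - p)) : ℝ) : ℂ) •
      permMat (Prod.swap : Fin d × Fin d → Fin d × Fin d) := by
    rw [hA, rsmul, ptrans1_smul, ptrans1_PhiMax, smul_smul]
    congr 1
    push_cast
    field_simp
  have hBG : ptrans1 B - ((((d : ℝ) - 1) / ((d : ℝ) * (1 - p)) : ℝ) : ℂ) • 1 =
      ((((d : ℝ) * (1 - p))⁻¹ : ℝ) : ℂ) •
        (1 - permMat (Prod.swap : Fin d × Fin d → Fin d × Fin d)) := by
    rw [hB, rsmul, ptrans1_smul, ptrans1_sub, ptrans1_one, ptrans1_PhiMax]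
    ext i j
    simp only [Matrix.sub_apply, Matrix.smul_apply, smul_eq_mul]
    push_cast
    field_simp
    ring
  have hBtpsd : (ptrans1 B - ((((d : ℝ) - 1) / ((d : ℝ) * (1 - p)) : ℝ) : ℂ) • 1).PosSemidef := by
    rw [hBG]
    exact psd_smul_c (one_sub_permMat_psd hswap) hs
  -- single-copy trace identities against iso
  have hΦΦ := PhiMax_mul_self hdC
  have hΦtr := PhiMax_trace hdC
  have hΦiso : PhiMax d * iso d p = ((p : ℝ) : ℂ) • PhiMax d := by
    rw [iso, rsmul, rsmul, Matrix.mul_add, Matrix.mul_smul, Matrix.mul_smul, Matrix.mul_sub,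
      Matrix.mul_one, hΦΦ, sub_self, smul_zero, add_zero]
  have hd21R : ((d : ℝ) ^ 2 - 1 : ℝ) ≠ 0 := by nlinarith
  have hd21C : ((d : ℂ) ^ 2 - 1 : ℂ) ≠ 0 := by
    have : (((d : ℝ) ^ 2 - 1 : ℝ) : ℂ) ≠ 0 := Complex.ofReal_ne_zero.mpr hd21R
    push_cast at this
    exact this
  have htriso : (iso d p).trace = 1 := by
    rw [iso, rsmul, rsmul, Matrix.trace_add, Matrix.trace_smul, Matrix.trace_smul,
      Matrix.trace_sub, hΦtr, Matrix.trace_one]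
    simp only [smul_eq_mul, Fintype.card_prod, Fintype.card_fin]
    push_cast
    field_simp
    ring
  have hAiso : (A * iso d p).trace = ((p * ((d : ℝ) - 1) / (1 - p) : ℝ) : ℂ) := by
    rw [hA, rsmul, Matrix.smul_mul, Matrix.trace_smul, smul_eq_mul, hΦiso, Matrix.trace_smul,
      smul_eq_mul, hΦtr]
    push_cast
    field_simp
  have hBiso : (B * iso d p).trace = 1 := by
    rw [hB, rsmul, Matrix.smul_mul, Matrix.trace_smul, smul_eq_mul, Matrix.sub_mul,
      Matrix.one_mul, Matrix.trace_sub, htriso, hΦiso, Matrix.trace_smul, smul_eq_mul, hΦtr]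
    push_cast
    field_simp
  refine ⟨?_, ⟨hAiso, hBiso⟩, ?_, ?_⟩
  · -- part (i)
    rintro σ ⟨⟨hσpsd, hσtr⟩, hσΓ⟩
    have hu1 : (((permMat (Prod.swap : Fin d × Fin d → Fin d × Fin d)) * ptrans1 σ).trace).re ≤ 1 := by
      have hps := trace_mul_psd_nonneg (one_sub_permMat_psd hswap) hσΓ
      rw [Matrix.sub_mul, Matrix.one_mul, Matrix.trace_sub, ptrans1_trace, hσtr] at hps
      simp only [Complex.sub_re, Complex.one_re] at hps
      linarith
    set u : ℂ := ((permMat (Prod.swap : Fin d × Fin d → Fin d × Fin d)) * ptrans1 σ).trace with hu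
    have hΦσ : (PhiMax d * σ).trace = (d : ℂ)⁻¹ * u := by
      rw [← ptrans1_trace_pair, ptrans1_PhiMax, Matrix.smul_mul, Matrix.trace_smul, smul_eq_mul]
    have hAσ : ((A * σ).trace).re = (((d : ℝ) - 1) / (1 - p)) * (d : ℝ)⁻¹ * u.re := by
      rw [hA, rsmul, Matrix.smul_mul, Matrix.trace_smul, smul_eq_mul, hΦσ,
        show ((((d : ℝ) - 1) / (1 - p) : ℝ) : ℂ) * ((d : ℂ)⁻¹ * u) =
          (((((d : ℝ) - 1) / (1 - p)) * (d : ℝ)⁻¹ : ℝ) : ℂ) * u by push_cast; ring,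
        Complex.re_ofReal_mul]
    have hBσ : ((B * σ).trace).re = (1 - p)⁻¹ - ((1 - p)⁻¹ * (d : ℝ)⁻¹) * u.re := by
      rw [hB, rsmul, Matrix.smul_mul, Matrix.trace_smul, smul_eq_mul, Matrix.sub_mul,
        Matrix.one_mul, Matrix.trace_sub, hσtr, hΦσ,
        show (((1 - p)⁻¹ : ℝ) : ℂ) * (1 - (d : ℂ)⁻¹ * u) =
          (((1 - p)⁻¹ : ℝ) : ℂ) - ((((1 - p)⁻¹ * (d : ℝ)⁻¹ : ℝ)) : ℂ) * u by push_cast; ring]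
      simp only [Complex.sub_re, Complex.re_ofReal_mul, Complex.ofReal_re]
    have hcd0 : (0 : ℝ) ≤ (((d : ℝ) - 1) / (1 - p)) * (d : ℝ)⁻¹ :=
      mul_nonneg (div_nonneg (by linarith) (le_of_lt h1p)) (by positivity)
    have hcd : (((d : ℝ) - 1) / (1 - p)) * (d : ℝ)⁻¹ = ((d : ℝ) - 1) / ((d : ℝ) * (1 - p)) := by
      rw [mul_comm ((d : ℝ)) (1 - p), ← div_div, div_eq_mul_inv (((d : ℝ) - 1) / (1 - p))]
    have hg1 : ((A * σ).trace).re ≤ ((d : ℝ) - 1) / ((d : ℝ) * (1 - p)) := by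
      rw [hAσ]
      have := mul_le_mul_of_nonneg_left hu1 hcd0
      linarith [hcd]
    have hq0 : (0 : ℝ) ≤ (1 - p)⁻¹ * (d : ℝ)⁻¹ := by positivity
    have heq2 : (1 - p)⁻¹ - (1 - p)⁻¹ * (d : ℝ)⁻¹ = ((d : ℝ) - 1) / ((d : ℝ) * (1 - p)) := by
      field_simp
    have hg2 : ((d : ℝ) - 1) / ((d : ℝ) * (1 - p)) ≤ ((B * σ).trace).re := by
      rw [hBσ]
      have := mul_le_mul_of_nonneg_left hu1 hq0
      linarith [heq2]
    refine ⟨hg1, hg2, ?_⟩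
    rw [Matrix.sub_mul, Matrix.trace_sub, Complex.sub_re]
    linarith
  · -- part (iii), inequality
    rintro n σ ⟨⟨hσpsd, hσtr⟩, hσΓ⟩
    have hg : Function.Involutive
        (fun i : Fin n → Fin d × Fin d => fun k => Prod.swap (i k)) := by
      intro i
      funext k
      exact Prod.swap_swap _
    have hAt : tpow (ptrans1 A) n =
        ((((d : ℝ) - 1) / ((d : ℝ) * (1 - p)) : ℝ) : ℂ) ^ n •
          permMat (fun i : Fin n → Fin d × Fin d => fun k => Prod.swap (i k)) := by
      rw [hAG, tpow_smul, tpow_permMat]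
    have h2 : (((((d : ℝ) - 1) / ((d : ℝ) * (1 - p)) : ℝ) : ℂ) ^ n • 1
        - tpow (ptrans1 A) n).PosSemidef := by
      rw [hAt, ← smul_sub,
        show ((((d : ℝ) - 1) / ((d : ℝ) * (1 - p)) : ℝ) : ℂ) ^ n
          = ((((((d : ℝ) - 1) / ((d : ℝ) * (1 - p))) ^ n : ℝ)) : ℂ) by push_cast; ring]
      exact psd_smul_c (one_sub_permMat_psd hg) (pow_nonneg ht n)
    have h1 := tpow_sub_psd ht hBtpsd n
    have hsum : (tpow (ptrans1 B) n - tpow (ptrans1 A) n).PosSemidef := by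
      have h3 := h1.add h2
      rwa [sub_add_sub_cancel] at h3
    have hfin := trace_mul_psd_nonneg hsum hσΓ
    rw [← ptransN_trace_pair, ptransN_sub, ptransN_tpow, ptransN_tpow]
    exact hfin
  · -- part (iii), traces
    intro n
    constructor
    · rw [trace_tpow_mul, hAiso, ← Complex.ofReal_pow]
    · rw [trace_tpow_mul, hBiso, one_pow]


end QRT
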